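/- Let u₁, …, u_p be independent real-valued random variables, each with mean zero and taking values in [−1, 1] almost surely. Let a ∈ ℝ^n, b ∈ ℝ, d ∈ ℝ^p, z ∈ ℝ^n, V ∈ ℝ^{n×p}, and ε ∈ (0, 1). If there exists y ∈ ℝ^p such that aᵀz + Γ‖Vᵀa − d − y‖_∞ + ‖y‖₁ ≤ b holds with Γ = √(2 ln(1/ε))·√p, then ℙ[aᵀ(z + V u) ≤ b + dᵀu] ≥ 1 − ε. -/

import Mathlib

open Matrix MeasureTheory ProbabilityTheory Real

lemma exp_mul_int {Ω : Type*} [MeasurableSpace Ω] (P : Measure Ω) [IsProbabilityMeasure P]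
    (X : Ω → ℝ) (hm : Measurable X) (hb : ∀ᵐ ω ∂P, |X ω| ≤ 1) (t c : ℝ) :
    Integrable (fun ω => exp (t * (c * X ω))) P := by
  refine Integrable.mono' (integrable_const (exp (|t * c|)))
    ((hm.const_mul c).const_mul t).exp.aestronglyMeasurable ?_
  filter_upwards [hb] with ω h
  rw [Real.norm_eq_abs, abs_exp, exp_le_exp]
  calc t * (c * X ω) = X ω * (t * c) := by ring
    _ ≤ |X ω * (t * c)| := le_abs_self _
    _ = |X ω| * |t * c| := abs_mul _ _
    _ ≤ 1 * |t * c| := by gcongr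
    _ = |t * c| := one_mul _

lemma hoeffding_mgf {Ω : Type*} [MeasurableSpace Ω] (P : Measure Ω) [IsProbabilityMeasure P]
    (X : Ω → ℝ) (hm : Measurable X) (hmean : ∫ ω, X ω ∂P = 0)
    (hb : ∀ᵐ ω ∂P, |X ω| ≤ 1) (t c : ℝ) :
    mgf (fun ω => c * X ω) P t ≤ exp (t ^ 2 * c ^ 2 / 2) := by
  have hX_int : Integrable X P := by
    refine Integrable.mono' (integrable_const 1) hm.aestronglyMeasurable ?_
    filter_upwards [hb] with ω h using by simpa using h
  have hle : ∀ᵐ ω ∂P, exp (t * (c * X ω)) ≤ cosh (t * c) + X ω * sinh (t * c) := by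
    filter_upwards [hb] with ω h
    have := exp_mul_le_cosh_add_mul_sinh h (t * c)
    calc exp (t * (c * X ω)) = exp (X ω * (t * c)) := by ring_nf
      _ ≤ _ := this
  have hint2 : Integrable (fun ω => cosh (t * c) + X ω * sinh (t * c)) P :=
    (integrable_const _).add (hX_int.mul_const _)
  calc mgf (fun ω => c * X ω) P t = ∫ ω, exp (t * (c * X ω)) ∂P := rfl
    _ ≤ ∫ ω, (cosh (t * c) + X ω * sinh (t * c)) ∂P :=
        integral_mono_ae (exp_mul_int P X hm hb t c) hint2 hle
    _ = cosh (t * c) + (∫ ω, X ω ∂P) * sinh (t * c) := by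
        rw [integral_add (integrable_const _) (hX_int.mul_const _), integral_const,
          integral_mul_const]
        simp
    _ = cosh (t * c) := by rw [hmean]; ring
    _ ≤ exp ((t * c) ^ 2 / 2) := cosh_le_exp_half_sq _
    _ = exp (t ^ 2 * c ^ 2 / 2) := by ring_nf

/-- One-sided Hoeffding tail bound for weighted sums. -/
lemma hoeffding_tail {p : ℕ} {Ω : Type*} [MeasurableSpace Ω] (P : Measure Ω)
    [IsProbabilityMeasure P] (u : Fin p → Ω → ℝ)
    (hmeas : ∀ k, Measurable (u k))
    (hindep : iIndepFun u P)
    (hmean : ∀ k, ∫ ω, u k ω ∂P = 0)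
    (hbdd : ∀ k, ∀ᵐ ω ∂P, |u k ω| ≤ 1)
    (c : Fin p → ℝ) (s t : ℝ) (ht : 0 ≤ t) :
    (P {ω | s ≤ ∑ k, c k * u k ω}).toReal ≤
      exp (-t * s + t ^ 2 * (∑ k, (c k) ^ 2) / 2) := by
  set X : Fin p → Ω → ℝ := fun k ω => c k * u k ω with hX
  have hXmeas : ∀ k, Measurable (X k) := fun k => (hmeas k).const_mul _
  have hXindep : iIndepFun X P := by
    exact hindep.comp (fun k x => c k * x) (fun k => measurable_const_mul _)
  have hSum : (fun ω => ∑ k, c k * u k ω) = ∑ k, X k := by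
    funext ω; simp [hX, Finset.sum_apply]
  have hint : ∀ k, k ∈ Finset.univ → Integrable (fun ω => exp (t * X k ω)) P :=
    fun k _ => exp_mul_int P (u k) (hmeas k) (hbdd k) t (c k)
  have h1 : (P {ω | s ≤ ∑ k, c k * u k ω}).toReal ≤
      exp (-t * s) * mgf (∑ k, X k) P t := by
    have hset : {ω | s ≤ ∑ k, c k * u k ω} = {ω | s ≤ (∑ k, X k) ω} :=
      Set.ext fun ω => by rw [← hSum]
    rw [hset]
    exact measure_ge_le_exp_mul_mgf s ht (hXindep.integrable_exp_mul_sum hXmeas hint)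
  have h2 : mgf (∑ k, X k) P t ≤ exp (t ^ 2 * (∑ k, (c k) ^ 2) / 2) := by
    rw [hXindep.mgf_sum hXmeas]
    calc ∏ k, mgf (X k) P t ≤ ∏ k, exp (t ^ 2 * (c k) ^ 2 / 2) := by
          refine Finset.prod_le_prod (fun k _ => mgf_nonneg) (fun k _ => ?_)
          exact hoeffding_mgf P (u k) (hmeas k) (hmean k) (hbdd k) t (c k)
      _ = exp (t ^ 2 * (∑ k, (c k) ^ 2) / 2) := by
          rw [← Real.exp_sum, Finset.mul_sum, Finset.sum_div]
  calc (P {ω | s ≤ ∑ k, c k * u k ω}).toReal ≤ exp (-t * s) * mgf (∑ k, X k) P t := h1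
    _ ≤ exp (-t * s) * exp (t ^ 2 * (∑ k, (c k) ^ 2) / 2) := by
        gcongr
    _ = exp (-t * s + t ^ 2 * (∑ k, (c k) ^ 2) / 2) := (Real.exp_add _ _).symm

/-- **Calibrated budget robust counterpart.** If `u₁,…,u_p` are independent, mean-zero,
`[−1,1]`-valued random variables and there is `y` with
`aᵀz + Γ‖Vᵀa − d − y‖_∞ + ‖y‖₁ ≤ b` for `Γ = √(2 ln(1/ε))·√p`, then
`ℙ[aᵀ(z + Vu) ≤ b + dᵀu] ≥ 1 − ε`. -/
theorem budget_rc_epsilon_guarantee {p n : ℕ} (hp : 0 < p)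
    {Ω : Type*} [MeasurableSpace Ω] (P : Measure Ω) [IsProbabilityMeasure P]
    (u : Fin p → Ω → ℝ)
    (hmeas : ∀ k, Measurable (u k))
    (hindep : iIndepFun u P)
    (hmean : ∀ k, ∫ ω, u k ω ∂P = 0)
    (hbdd : ∀ k, ∀ᵐ ω ∂P, u k ω ∈ Set.Icc (-1 : ℝ) 1)
    (a : Fin n → ℝ) (b : ℝ) (d : Fin p → ℝ)
    (z : Fin n → ℝ) (V : Matrix (Fin n) (Fin p) ℝ)
    (ε : ℝ) (hε0 : 0 < ε) (hε1 : ε < 1)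
    (y : Fin p → ℝ)
    (hrc : a ⬝ᵥ z + (Real.sqrt (2 * Real.log (1 / ε)) * Real.sqrt p) *
        ‖Vᵀ *ᵥ a - d - y‖ + ∑ k, |y k| ≤ b) :
    P {ω | a ⬝ᵥ (z + V *ᵥ fun k => u k ω) ≤ b + d ⬝ᵥ fun k => u k ω} ≥
      ENNReal.ofReal (1 - ε) := by
  have hbdd' : ∀ k, ∀ᵐ ω ∂P, |u k ω| ≤ 1 := by
    intro k; filter_upwards [hbdd k] with ω h using abs_le.mpr ⟨h.1, h.2⟩
  set c : Fin p → ℝ := Vᵀ *ᵥ a - d - y with hc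
  set Γ : ℝ := Real.sqrt (2 * Real.log (1 / ε)) * Real.sqrt p with hΓ
  set s : ℝ := Γ * ‖c‖ with hs
  set S : Ω → ℝ := fun ω => ∑ k, c k * u k ω with hS
  have hSmeas : Measurable S := by
    apply Finset.measurable_sum
    exact fun k _ => (hmeas k).const_mul _
  -- step 1: tail bound P {s ≤ S} ≤ ofReal ε
  have htail : P {ω | s < S ω} ≤ ENNReal.ofReal ε := by
    by_cases hczero : c = 0
    · have hempty : {ω | s < S ω} = ∅ := by
        ext ω; simp [hS, hs, hczero]
      simp [hempty]
    · refine le_trans (measure_mono (fun ω (h : s < S ω) => (h.le : s ≤ S ω))) ?_ -- positive quantities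
      have hlog : 0 < Real.log (1 / ε) :=
        Real.log_pos (one_lt_one_div hε0 hε1)
      have hcn : 0 < ‖c‖ := norm_pos_iff.mpr hczero
      have hΓpos : 0 < Γ := by
        apply mul_pos <;> apply Real.sqrt_pos.mpr
        · linarith
        · exact_mod_cast hp
      have hspos : 0 < s := mul_pos hΓpos hcn
      set σ2 : ℝ := ∑ k, (c k) ^ 2 with hσ2
      have hσpos : 0 < σ2 := by
        obtain ⟨k, hk⟩ := Function.ne_iff.mp hczero
        refine Finset.sum_pos' (fun k _ => sq_nonneg _) ⟨k, Finset.mem_univ k, ?_⟩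
        exact lt_of_le_of_ne (sq_nonneg _) (Ne.symm (pow_ne_zero 2 hk))
      have hσle : σ2 ≤ (p : ℝ) * ‖c‖ ^ 2 := by
        calc σ2 ≤ ∑ _k : Fin p, ‖c‖ ^ 2 := by
              refine Finset.sum_le_sum fun k _ => ?_
              have := norm_le_pi_norm c k
              rw [Real.norm_eq_abs] at this
              calc (c k) ^ 2 = |c k| ^ 2 := (sq_abs _).symm
                _ ≤ ‖c‖ ^ 2 := by gcongr
          _ = (p : ℝ) * ‖c‖ ^ 2 := by simp [mul_comm]
      have hs2 : s ^ 2 = 2 * Real.log (1 / ε) * (p : ℝ) * ‖c‖ ^ 2 := by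
        rw [hs, hΓ, mul_pow, mul_pow, Real.sq_sqrt (by linarith), Real.sq_sqrt (by positivity)]
        try ring
      set t : ℝ := s / σ2 with ht
      have h1 := hoeffding_tail P u hmeas hindep hmean hbdd' c s t
        (by positivity)
      have h2 : -t * s + t ^ 2 * σ2 / 2 = -(s ^ 2 / (2 * σ2)) := by
        rw [ht]; field_simp; ring
      have h3 : Real.exp (-t * s + t ^ 2 * σ2 / 2) ≤ ε := by
        rw [h2]
        have harg : Real.log (1 / ε) ≤ s ^ 2 / (2 * σ2) := by
          rw [le_div_iff₀ (by positivity), hs2]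
          nlinarith [hlog.le, hσle]
        calc Real.exp (-(s ^ 2 / (2 * σ2))) ≤ Real.exp (-(Real.log (1/ε))) := by
              gcongr
          _ = ε := by rw [one_div, Real.log_inv, neg_neg, Real.exp_log hε0]
        
      have h4 : (P {ω | s ≤ S ω}).toReal ≤ ε := le_trans h1 h3
      calc P {ω | s ≤ S ω} = ENNReal.ofReal ((P {ω | s ≤ S ω}).toReal) :=
            (ENNReal.ofReal_toReal (measure_ne_top _ _)).symm
        _ ≤ ENNReal.ofReal ε := ENNReal.ofReal_le_ofReal h4
  -- step 2: event inclusion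
  have hsub : ∀ᵐ ω ∂P, ω ∈ {ω | s < S ω}ᶜ →
      ω ∈ {ω | a ⬝ᵥ (z + V *ᵥ fun k => u k ω) ≤ b + d ⬝ᵥ fun k => u k ω} := by
    filter_upwards [MeasureTheory.ae_all_iff.mpr hbdd'] with ω hw hSω
    simp only [Set.mem_compl_iff, Set.mem_setOf_eq, not_lt] at hSω ⊢
    set w : Fin p → ℝ := fun k => u k ω with hwdef
    have key : (Vᵀ *ᵥ a) ⬝ᵥ w ≤ s + d ⬝ᵥ w + ∑ k, |y k| := by
      have expand : (Vᵀ *ᵥ a) ⬝ᵥ w = S ω + d ⬝ᵥ w + ∑ k, y k * w k := by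
        simp only [hS, dotProduct, hc, Pi.sub_apply]
        rw [← Finset.sum_add_distrib, ← Finset.sum_add_distrib]
        exact Finset.sum_congr rfl fun k _ => by ring
      rw [expand]
      have hyw : ∑ k, y k * w k ≤ ∑ k, |y k| := by
        refine Finset.sum_le_sum fun k _ => ?_
        calc y k * w k ≤ |y k * w k| := le_abs_self _
          _ = |y k| * |w k| := abs_mul _ _
          _ ≤ |y k| * 1 := by gcongr; exact hw k
          _ = |y k| := mul_one _
      linarith [hSω]
    have : a ⬝ᵥ (z + V *ᵥ w) = a ⬝ᵥ z + (Vᵀ *ᵥ a) ⬝ᵥ w := by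
      rw [dotProduct_add]
      congr 1
      rw [Matrix.mulVec_transpose, ← Matrix.dotProduct_mulVec]
    rw [this]
    linarith [hrc]
  -- conclude
  have hBmeas : MeasurableSet {ω | s < S ω} := measurableSet_lt measurable_const hSmeas
  calc ENNReal.ofReal (1 - ε) = 1 - ENNReal.ofReal ε := by
        rw [ENNReal.ofReal_sub _ hε0.le, ENNReal.ofReal_one]
    _ ≤ 1 - P {ω | s < S ω} := by exact tsub_le_tsub_left htail 1
    _ = P ({ω | s < S ω}ᶜ) := by
        rw [measure_compl hBmeas (measure_ne_top _ _), measure_univ]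
    _ ≤ P {ω | a ⬝ᵥ (z + V *ᵥ fun k => u k ω) ≤ b + d ⬝ᵥ fun k => u k ω} :=
        measure_mono_ae hsub
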